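/- Let (X,S) be an association scheme, (Y,T) a 3-equivalenced association scheme with |T| > 2, x₀ ∈ X, y₀ ∈ Y, and fix well-ordering enumerations of the sets y₀t (t ∈ T_3). Then the linear span of {G'_{y₀t, y₀t'} : t, t' ∈ T_3} is a two-sided ideal of the Terwilliger algebra T(S≀T) of the wreath product at (x₀,y₀), the matrices G'_{y₀t, y₀t'} satisfy G'_{y₀t, y₀t'} · G'_{y₀t''', y₀t''} = δ_{t', t'''} G'_{y₀t, y₀t''}, and the linear map sending G'_{y₀t, y₀t'} to the matrix unit E_{t,t'} is an algebra isomorphism from this span onto the full matrix algebra Mat_{T_3}(ℂ). -/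

import Mathlib

open Matrix BigOperators Kronecker
open scoped Classical

section Defs

variable {Z : Type*} [Fintype Z] [DecidableEq Z]

/-- The identity (diagonal) relation on `Z`. -/
def diagRel (Z : Type*) [Fintype Z] [DecidableEq Z] : Finset (Z × Z) :=
  Finset.univ.filter fun p => p.1 = p.2

/-- The converse relation. -/
def convRel (s : Finset (Z × Z)) : Finset (Z × Z) := s.image fun p => (p.2, p.1)

/-- The intersection number `p_{st}^u`, computed at an arbitrary pair of `u`. -/
noncomputable def pNum (s t u : Finset (Z × Z)) : ℕ :=
  if h : u.Nonempty then
    (Finset.univ.filter fun z => (h.choose.1, z) ∈ s ∧ (z, h.choose.2) ∈ t).card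
  else 0

/-- The valency `n_s = p_{s s*}^{1}`. -/
noncomputable def valency (s : Finset (Z × Z)) : ℕ := pNum s (convRel s) (diagRel Z)

/-- The adjacency matrix of a relation. -/
def adjMat (s : Finset (Z × Z)) : Matrix Z Z ℂ :=
  Matrix.of fun x y => if (x, y) ∈ s then 1 else 0

/-- The diagonal 0/1 matrix of a subset. -/
def eps (U : Finset Z) : Matrix Z Z ℂ := Matrix.diagonal fun i => if i ∈ U then 1 else 0

/-- The all-ones matrix. -/
def allOnes (Z : Type*) : Matrix Z Z ℂ := Matrix.of fun _ _ => 1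

/-- `pointFiber x s = xs = {y : (x,y) ∈ s}`. -/
def pointFiber (x : Z) (s : Finset (Z × Z)) : Finset Z :=
  Finset.univ.filter fun y => (x, y) ∈ s

/-- An association scheme on a finite set `Z`: a partition of `Z × Z` into nonempty
relations containing the identity relation, closed under converse, and with
well-defined intersection numbers. -/
structure AssocScheme (Z : Type*) [Fintype Z] [DecidableEq Z] where
  rels : Finset (Finset (Z × Z))
  nonempty_mem : ∀ s ∈ rels, s.Nonempty
  cover : ∀ p : Z × Z, ∃ s ∈ rels, p ∈ s
  pairwise_disjoint : ∀ s ∈ rels, ∀ t ∈ rels, s ≠ t → Disjoint s t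
  id_mem : diagRel Z ∈ rels
  conv_mem : ∀ s ∈ rels, convRel s ∈ rels
  pconst : ∀ s ∈ rels, ∀ t ∈ rels, ∀ u ∈ rels, ∀ p ∈ u, ∀ q ∈ u,
    (Finset.univ.filter fun z => (p.1, z) ∈ s ∧ (z, p.2) ∈ t).card =
    (Finset.univ.filter fun z => (q.1, z) ∈ s ∧ (z, q.2) ∈ t).card

/-- A scheme is 3-equivalenced when it has more than one point and every
non-identity basic relation has valency 3. -/
def ThreeEquivalenced (B : AssocScheme Z) : Prop :=
  1 < Fintype.card Z ∧ ∀ t ∈ B.rels, t ≠ diagRel Z → valency t = 3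

/-- A scheme is k-equivalenced when it has more than one point and every
non-identity basic relation has valency k. -/
def KEquivalenced (B : AssocScheme Z) (k : ℕ) : Prop :=
  1 < Fintype.card Z ∧ ∀ t ∈ B.rels, t ≠ diagRel Z → valency t = k

/-- A scheme is imprimitive if some union of basic relations is an equivalence
relation different from the identity relation and from the full relation. -/
def Imprimitive (B : AssocScheme Z) : Prop :=
  ∃ R ⊆ B.rels, Equivalence (fun x y : Z => (x, y) ∈ R.sup id) ∧
    R.sup id ≠ diagRel Z ∧ R.sup id ≠ Finset.univ

/-- A coherent algebra: a subalgebra of the matrix algebra containing the all-ones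
matrix (and the identity), closed under conjugate transpose and Hadamard product. -/
def IsCoherent (𝒜 : Subalgebra ℂ (Matrix Z Z ℂ)) : Prop :=
  allOnes Z ∈ 𝒜 ∧ (∀ M ∈ 𝒜, Mᴴ ∈ 𝒜) ∧
  ∀ M ∈ 𝒜, ∀ N ∈ 𝒜, Matrix.hadamard M N ∈ 𝒜

/-- The one-point-extension algebra: the smallest coherent algebra containing all
adjacency matrices of the scheme and the diagonal matrix unit at `x`. -/
noncomputable def onePointAlg (B : AssocScheme Z) (x : Z) : Subalgebra ℂ (Matrix Z Z ℂ) :=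
  sInf {𝒜 | IsCoherent 𝒜 ∧ (∀ s ∈ B.rels, adjMat s ∈ 𝒜) ∧ eps {x} ∈ 𝒜}

/-- A matrix has only 0/1 entries. -/
def IsZeroOne (M : Matrix Z Z ℂ) : Prop := ∀ i j, M i j = 0 ∨ M i j = 1

/-- A basic relation matrix of a coherent algebra: a nonzero 0/1 matrix in the
algebra whose only 0/1 minorants in the algebra are 0 and itself. -/
def IsBasicMatrix (𝒜 : Subalgebra ℂ (Matrix Z Z ℂ)) (B : Matrix Z Z ℂ) : Prop :=
  B ∈ 𝒜 ∧ IsZeroOne B ∧ B ≠ 0 ∧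
  ∀ C ∈ 𝒜, IsZeroOne C → (∀ i j, C i j = 1 → B i j = 1) → C = 0 ∨ C = B

/-- The Terwilliger algebra of a scheme with respect to the base point `x`. -/
noncomputable def terwAlg (B : AssocScheme Z) (x : Z) : Subalgebra ℂ (Matrix Z Z ℂ) :=
  Algebra.adjoin ℂ
    ({M | ∃ s ∈ B.rels, M = adjMat s} ∪ {M | ∃ s ∈ B.rels, M = eps (pointFiber x s)})

/-- A central primitive idempotent of a (set underlying a) matrix algebra: a nonzero
central idempotent that is not the sum of two nonzero orthogonal central idempotents. -/
def IsCPI {n : Type*} [Fintype n] [DecidableEq n] (𝒜 : Set (Matrix n n ℂ))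
    (e : Matrix n n ℂ) : Prop :=
  e ∈ 𝒜 ∧ e ≠ 0 ∧ e * e = e ∧ (∀ a ∈ 𝒜, a * e = e * a) ∧
  ¬∃ f g : Matrix n n ℂ, f ∈ 𝒜 ∧ g ∈ 𝒜 ∧ f ≠ 0 ∧ g ≠ 0 ∧
    f * f = f ∧ g * g = g ∧ (∀ a ∈ 𝒜, a * f = f * a) ∧ (∀ a ∈ 𝒜, a * g = g * a) ∧
    f * g = 0 ∧ g * f = 0 ∧ e = f + g

/-- The trivial central primitive idempotent
`∑_{s∈S} n_s⁻¹ ε_{x s} J ε_{x s}` of the Terwilliger algebra. -/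
noncomputable def trivTerwIdem (B : AssocScheme Z) (x : Z) : Matrix Z Z ℂ :=
  ∑ s ∈ B.rels, ((valency s : ℂ)⁻¹) •
    (eps (pointFiber x s) * allOnes Z * eps (pointFiber x s))

/-- The adjacency algebra `A(S) = span{σ_s : s ∈ S}` as a set of matrices. -/
def adjAlgSet (B : AssocScheme Z) : Set (Matrix Z Z ℂ) :=
  ↑(Submodule.span ℂ {M | ∃ s ∈ B.rels, M = adjMat s})

end Defs

section Wreath

variable {X Y : Type*} [Fintype X] [DecidableEq X] [Fintype Y] [DecidableEq Y]

/-- Generators of the Terwilliger algebra of the wreath product at `(x₀, y₀)`. -/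
def wreathGens (A : AssocScheme X) (B : AssocScheme Y) (x₀ : X) (y₀ : Y) :
    Set (Matrix (X × Y) (X × Y) ℂ) :=
  {M | ∃ s ∈ A.rels, M = adjMat s ⊗ₖ (1 : Matrix Y Y ℂ)} ∪
  {M | ∃ s ∈ A.rels, M = eps (pointFiber x₀ s) ⊗ₖ eps ({y₀} : Finset Y)} ∪
  {M | ∃ t ∈ B.rels, t ≠ diagRel Y ∧ M = allOnes X ⊗ₖ adjMat t} ∪
  {M | ∃ t ∈ B.rels, t ≠ diagRel Y ∧ M = (1 : Matrix X X ℂ) ⊗ₖ eps (pointFiber y₀ t)}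

/-- The Terwilliger algebra of the wreath product at `(x₀, y₀)`. -/
noncomputable def wreathTerw (A : AssocScheme X) (B : AssocScheme Y) (x₀ : X) (y₀ : Y) :
    Subalgebra ℂ (Matrix (X × Y) (X × Y) ℂ) :=
  Algebra.adjoin ℂ (wreathGens A B x₀ y₀)

/-- The relation `s̃` of the wreath product coming from `s ∈ S`. -/
def tildeRel (s : Finset (X × X)) : Finset ((X × Y) × (X × Y)) :=
  Finset.univ.filter fun p => (p.1.1, p.2.1) ∈ s ∧ p.1.2 = p.2.2

/-- The relation `t̄` of the wreath product coming from `t ∈ T \ {1}`. -/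
def barRel (t : Finset (Y × Y)) : Finset ((X × Y) × (X × Y)) :=
  Finset.univ.filter fun p => (p.1.2, p.2.2) ∈ t

/-- The basic relations of the wreath product `S ≀ T`. -/
def wreathRels (A : AssocScheme X) (B : AssocScheme Y) :
    Finset (Finset ((X × Y) × (X × Y))) :=
  A.rels.image (tildeRel (Y := Y)) ∪ (B.rels.erase (diagRel Y)).image (barRel (X := X))

/-- The trivial central primitive idempotent
`e₀ = ∑_u n_u⁻¹ ε_{(x₀,y₀)u} J ε_{(x₀,y₀)u}` of `T(S ≀ T)`. -/
noncomputable def wreathTriv (A : AssocScheme X) (B : AssocScheme Y) (x₀ : X) (y₀ : Y) :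
    Matrix (X × Y) (X × Y) ℂ :=
  ∑ u ∈ wreathRels A B, ((valency u : ℂ)⁻¹) •
    (eps (pointFiber (x₀, y₀) u) * allOnes (X × Y) * eps (pointFiber (x₀, y₀) u))

/-- `ω = e^{2πi/3}`. -/
noncomputable def omega3 : ℂ := Complex.exp (2 * Real.pi * Complex.I / 3)

/-- The shifted matching matrix `∑_i E_{y_{t(i)}, y_{t'(i+k)}}` on `y₀t × y₀t'`. -/
noncomputable def cyc (enum : Finset (Y × Y) → Fin 3 → Y) (t t' : Finset (Y × Y))
    (k : Fin 3) : Matrix Y Y ℂ :=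
  ∑ i : Fin 3, Matrix.single (enum t i) (enum t' (i + k)) 1

/-- `G_{y₀t, y₀t'}`. -/
noncomputable def Gmat (X : Type*) [Fintype X] (enum : Finset (Y × Y) → Fin 3 → Y)
    (t t' : Finset (Y × Y)) : Matrix (X × Y) (X × Y) ℂ :=
  ((3 * (Fintype.card X : ℂ))⁻¹) •
    (allOnes X ⊗ₖ (cyc enum t t' 0 + omega3 • cyc enum t t' 1 + omega3 ^ 2 • cyc enum t t' 2))

/-- `G'_{y₀t, y₀t'}`. -/
noncomputable def Gmat' (X : Type*) [Fintype X] (enum : Finset (Y × Y) → Fin 3 → Y)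
    (t t' : Finset (Y × Y)) : Matrix (X × Y) (X × Y) ℂ :=
  ((3 * (Fintype.card X : ℂ))⁻¹) •
    (allOnes X ⊗ₖ (cyc enum t t' 0 + omega3 ^ 2 • cyc enum t t' 1 + omega3 • cyc enum t t' 2))

/-- `enum` enumerates each set `y₀t` (for non-identity `t`) by `Fin 3`. -/
def IsEnum (B : AssocScheme Y) (y₀ : Y) (enum : Finset (Y × Y) → Fin 3 → Y) : Prop :=
  ∀ t ∈ B.rels, t ≠ diagRel Y →
    Function.Injective (enum t) ∧ ∀ y, y ∈ pointFiber y₀ t ↔ ∃ i, enum t i = y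

/-- The enumerations are well-ordering: every basic relation matrix of the
one-point-extension algebra which is nonzero on `y₀t × y₀t'` restricts there to one of
the cyclic permutation matrices `I, C, C²`. -/
def IsWellOrdering (B : AssocScheme Y) (y₀ : Y) (enum : Finset (Y × Y) → Fin 3 → Y) : Prop :=
  IsEnum B y₀ enum ∧
  ∀ t ∈ B.rels, t ≠ diagRel Y → ∀ t' ∈ B.rels, t' ≠ diagRel Y →
    ∀ M : Matrix Y Y ℂ, IsBasicMatrix (onePointAlg B y₀) M →
      (∃ i j : Fin 3, M (enum t i) (enum t' j) ≠ 0) →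
      ∃ k : Fin 3, ∀ i j : Fin 3,
        M (enum t i) (enum t' j) = if j = i + k then 1 else 0

/-- The set of all matrices `G_{y₀t, y₀t'}`, `t, t' ∈ T₃`. -/
noncomputable def GmatSet (X : Type*) [Fintype X] (B : AssocScheme Y)
    (enum : Finset (Y × Y) → Fin 3 → Y) : Set (Matrix (X × Y) (X × Y) ℂ) :=
  {M | ∃ t ∈ B.rels.erase (diagRel Y), ∃ t' ∈ B.rels.erase (diagRel Y), M = Gmat X enum t t'}

/-- The set of all matrices `G'_{y₀t, y₀t'}`, `t, t' ∈ T₃`. -/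
noncomputable def GmatSet' (X : Type*) [Fintype X] (B : AssocScheme Y)
    (enum : Finset (Y × Y) → Fin 3 → Y) : Set (Matrix (X × Y) (X × Y) ℂ) :=
  {M | ∃ t ∈ B.rels.erase (diagRel Y), ∃ t' ∈ B.rels.erase (diagRel Y), M = Gmat' X enum t t'}

/-- `e_{η1} = ∑_{t ∈ T₃} G_{y₀t, y₀t}`. -/
noncomputable def etaOne (X : Type*) [Fintype X] (B : AssocScheme Y)
    (enum : Finset (Y × Y) → Fin 3 → Y) : Matrix (X × Y) (X × Y) ℂ :=
  ∑ t ∈ B.rels.erase (diagRel Y), Gmat X enum t t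

/-- `e_{η2} = ∑_{t ∈ T₃} G'_{y₀t, y₀t}`. -/
noncomputable def etaTwo (X : Type*) [Fintype X] (B : AssocScheme Y)
    (enum : Finset (Y × Y) → Fin 3 → Y) : Matrix (X × Y) (X × Y) ℂ :=
  ∑ t ∈ B.rels.erase (diagRel Y), Gmat' X enum t t

end Wreath


section Helpers

lemma omega3_pow_three : omega3 ^ 3 = 1 := by
  rw [omega3, ← Complex.exp_nat_mul]
  have : (3 : ℕ) * (2 * ↑Real.pi * Complex.I / 3) = 2 * ↑Real.pi * Complex.I := by
    push_cast; ring
  rw [this, Complex.exp_two_pi_mul_I]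

lemma omega3_ne_one : omega3 ≠ 1 := by
  rw [omega3]
  intro h
  rw [Complex.exp_eq_one_iff] at h
  obtain ⟨n, hn⟩ := h
  have h2 : (2 * (Real.pi : ℂ) * Complex.I) ≠ 0 := by
    simp [Complex.I_ne_zero, Real.pi_ne_zero, Complex.ofReal_ne_zero]
  rw [div_eq_iff (by norm_num : (3:ℂ) ≠ 0)] at hn
  have h3 : (1 : ℂ) * (2 * ↑Real.pi * Complex.I) = ((3 * n : ℤ) : ℂ) * (2 * ↑Real.pi * Complex.I) := by
    push_cast; linear_combination hn
  have h4 : (1 : ℂ) = ((3 * n : ℤ) : ℂ) := mul_right_cancel₀ h2 h3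
  have h5 : (1 : ℤ) = 3 * n := by exact_mod_cast h4
  omega

lemma omega3_sum : 1 + omega3 + omega3 ^ 2 = 0 := by
  have h := omega3_pow_three
  have h1 := omega3_ne_one
  have : (omega3 - 1) * (1 + omega3 + omega3 ^ 2) = 0 := by linear_combination h
  rcases mul_eq_zero.1 this with h' | h'
  · exact absurd (by linear_combination h') h1
  · exact h'

lemma omega3_ne_zero : omega3 ≠ 0 := Complex.exp_ne_zero _

lemma conj_omega3 : starRingEnd ℂ omega3 = omega3 ^ 2 := by
  have habs : starRingEnd ℂ omega3 * omega3 = 1 := by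
    rw [omega3, ← Complex.exp_conj, ← Complex.exp_add]
    have : starRingEnd ℂ (2 * ↑Real.pi * Complex.I / 3) + 2 * ↑Real.pi * Complex.I / 3 = 0 := by
      rw [map_div₀, _root_.map_mul, _root_.map_mul, Complex.conj_I, Complex.conj_ofReal,
        map_ofNat, map_ofNat]
      ring
    rw [this, Complex.exp_zero]
  have h3 := omega3_pow_three
  apply mul_right_cancel₀ omega3_ne_zero
  rw [habs]; linear_combination -h3

/-- The coefficient vector of `M'(t,t')`. -/
noncomputable def hw : Fin 3 → ℂ := ![1, omega3 ^ 2, omega3]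

lemma hw_zero : hw 0 = 1 := rfl
lemma hw_one : hw 1 = omega3 ^ 2 := rfl
lemma hw_two : hw 2 = omega3 := rfl

lemma conj_hw (k : Fin 3) : starRingEnd ℂ (hw (-k)) = hw k := by
  have h2 : starRingEnd ℂ (omega3 ^ 2) = omega3 := by
    rw [map_pow, conj_omega3]
    linear_combination omega3 * omega3_pow_three
  fin_cases k
  · show starRingEnd ℂ (hw (-0)) = hw 0
    rw [neg_zero, hw_zero, _root_.map_one]
  · show starRingEnd ℂ (hw (-1)) = hw 1
    rw [show (-1 : Fin 3) = 2 by decide, hw_two, hw_one, conj_omega3]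
  · show starRingEnd ℂ (hw (-2)) = hw 2
    rw [show (-2 : Fin 3) = 1 by decide, hw_one, hw_two, h2]

/-- Discrete convolution on `Fin 3`. -/
noncomputable def convl (g h : Fin 3 → ℂ) : Fin 3 → ℂ := fun m => ∑ a : Fin 3, g a * h (m - a)

lemma convl_hw (g : Fin 3 → ℂ) (m : Fin 3) :
    convl g hw m = (g 0 + omega3 * g 1 + omega3 ^ 2 * g 2) * hw m := by
  have h3 := omega3_pow_three
  rw [convl, Fin.sum_univ_three]
  fin_cases m
  · show g 0 * hw (0 - 0) + g 1 * hw (0 - 1) + g 2 * hw (0 - 2) = _ * hw 0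
    rw [show (0:Fin 3) - 0 = 0 by decide, show (0:Fin 3) - 1 = 2 by decide,
      show (0:Fin 3) - 2 = 1 by decide, hw_zero, hw_one, hw_two]
    ring
  · show g 0 * hw (1 - 0) + g 1 * hw (1 - 1) + g 2 * hw (1 - 2) = _ * hw 1
    rw [show (1:Fin 3) - 0 = 1 by decide, show (1:Fin 3) - 1 = 0 by decide,
      show (1:Fin 3) - 2 = 2 by decide, hw_zero, hw_one, hw_two]
    linear_combination -(g 1 + omega3 * g 2) * h3
  · show g 0 * hw (2 - 0) + g 1 * hw (2 - 1) + g 2 * hw (2 - 2) = _ * hw 2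
    rw [show (2:Fin 3) - 0 = 2 by decide, show (2:Fin 3) - 1 = 1 by decide,
      show (2:Fin 3) - 2 = 0 by decide, hw_zero, hw_one, hw_two]
    linear_combination -(g 2) * h3

lemma convl_hw_hw (m : Fin 3) : convl hw hw m = 3 * hw m := by
  rw [convl_hw]
  have h3 := omega3_pow_three
  rw [hw_zero, hw_one, hw_two]
  have : (1 : ℂ) + omega3 * omega3 ^ 2 + omega3 ^ 2 * omega3 = 3 := by
    linear_combination 2 * h3
  rw [this]

lemma hw_sum : ∑ k : Fin 3, hw k = 0 := by
  rw [Fin.sum_univ_three, hw_zero, hw_one, hw_two]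
  linear_combination omega3_sum

end Helpers

set_option linter.unusedSectionVars false

section LinM
variable {Y : Type*} [Fintype Y] [DecidableEq Y]
  (enum : Finset (Y × Y) → Fin 3 → Y)

/-- `linM g t t' = ∑ₖ g k • cyc t t' k`. -/
noncomputable def linM (g : Fin 3 → ℂ) (t t' : Finset (Y × Y)) : Matrix Y Y ℂ :=
  ∑ k : Fin 3, g k • cyc enum t t' k

variable {enum}

lemma cyc_mul_cyc {t t' u : Finset (Y × Y)} (hinj : Function.Injective (enum t'))
    (k l : Fin 3) : cyc enum t t' k * cyc enum t' u l = cyc enum t u (k + l) := by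
  rw [cyc, cyc, Finset.sum_mul_sum]
  rw [cyc]
  refine Finset.sum_congr rfl fun i _ => ?_
  rw [Finset.sum_eq_single (i + k)]
  · rw [Matrix.single_mul_single_same, mul_one, add_assoc]
  · intro j _ hj
    exact Matrix.single_mul_single_of_ne (h := fun h => hj (hinj h).symm) ..
  · intro h; exact absurd (Finset.mem_univ _) h

lemma cyc_mul_cyc_zero {t t' t'' u : Finset (Y × Y)}
    (hdisj : ∀ i j, enum t' i ≠ enum t'' j) (k l : Fin 3) :
    cyc enum t t' k * cyc enum t'' u l = 0 := by
  rw [cyc, cyc, Finset.sum_mul_sum]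
  refine Finset.sum_eq_zero fun i _ => Finset.sum_eq_zero fun j _ => ?_
  exact Matrix.single_mul_single_of_ne (h := hdisj _ _) ..

lemma linM_mul_linM {t t' u : Finset (Y × Y)} (hinj : Function.Injective (enum t'))
    (g h : Fin 3 → ℂ) :
    linM enum g t t' * linM enum h t' u = linM enum (convl g h) t u := by
  rw [linM, linM, Finset.sum_mul_sum]
  have : ∀ k l : Fin 3, (g k • cyc enum t t' k) * (h l • cyc enum t' u l)
      = (g k * h l) • cyc enum t u (k + l) := by
    intro k l
    rw [Matrix.smul_mul, Matrix.mul_smul, cyc_mul_cyc hinj, smul_smul]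
  simp_rw [this]
  have h2 : ∀ k : Fin 3, ∑ l : Fin 3, (g k * h l) • cyc enum t u (k + l)
      = ∑ m : Fin 3, (g k * h (m - k)) • cyc enum t u m := by
    intro k
    exact Fintype.sum_equiv (Equiv.addLeft k) _ _ (fun l => by simp)
  simp_rw [h2]
  rw [Finset.sum_comm, linM]
  refine Finset.sum_congr rfl fun m _ => ?_
  rw [convl, Finset.sum_smul]

lemma linM_mul_linM_zero {t t' t'' u : Finset (Y × Y)}
    (hdisj : ∀ i j, enum t' i ≠ enum t'' j) (g h : Fin 3 → ℂ) :
    linM enum g t t' * linM enum h t'' u = 0 := by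
  rw [linM, linM, Finset.sum_mul_sum]
  refine Finset.sum_eq_zero fun k _ => Finset.sum_eq_zero fun l _ => ?_
  rw [Matrix.smul_mul, Matrix.mul_smul, cyc_mul_cyc_zero hdisj, smul_zero, smul_zero]

variable {t t' : Finset (Y × Y)}

lemma cyc_apply_eq (hinjt : Function.Injective (enum t))
    (hinjt' : Function.Injective (enum t')) (k i j : Fin 3) :
    cyc enum t t' k (enum t i) (enum t' j) = if j = i + k then 1 else 0 := by
  rw [cyc, Matrix.sum_apply]
  rw [Finset.sum_eq_single i]
  · simp only [Matrix.single, Matrix.of_apply]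
    by_cases h : j = i + k
    · simp [h]
    · have : ¬(enum t' (i + k) = enum t' j) := fun hc => h (hinjt' hc).symm
      simp [this, h]
  · intro i' _ hi'
    simp only [Matrix.single, Matrix.of_apply]
    have : ¬(enum t i' = enum t i) := fun hc => hi' (hinjt hc)
    simp [this]
  · intro h; exact absurd (Finset.mem_univ _) h

lemma cyc_apply_zero_left {y y' : Y} (h : ∀ i, enum t i ≠ y) (k : Fin 3) :
    cyc enum t t' k y y' = 0 := by
  rw [cyc, Matrix.sum_apply]
  refine Finset.sum_eq_zero fun i _ => ?_
  simp [Matrix.single, h i]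

lemma cyc_apply_zero_right {y y' : Y} (h : ∀ i, enum t' i ≠ y') (k : Fin 3) :
    cyc enum t t' k y y' = 0 := by
  rw [cyc, Matrix.sum_apply]
  refine Finset.sum_eq_zero fun i _ => ?_
  simp [Matrix.single, h (i + k)]

lemma linM_apply_eq (hinjt : Function.Injective (enum t))
    (hinjt' : Function.Injective (enum t')) (g : Fin 3 → ℂ) (i j : Fin 3) :
    linM enum g t t' (enum t i) (enum t' j) = g (j - i) := by
  rw [linM, Matrix.sum_apply]
  have : ∀ k : Fin 3, (g k • cyc enum t t' k) (enum t i) (enum t' j)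
      = g k * (if j = i + k then 1 else 0) := by
    intro k
    rw [Matrix.smul_apply, cyc_apply_eq hinjt hinjt', smul_eq_mul]
  simp_rw [this]
  rw [Finset.sum_eq_single (j - i)]
  · have : j = i + (j - i) := by
      rw [add_sub_cancel]
    rw [if_pos this, mul_one]
  · intro k _ hk
    have : ¬(j = i + k) := fun hc => hk (by rw [hc, add_sub_cancel_left])
    rw [if_neg this, mul_zero]
  · intro h; exact absurd (Finset.mem_univ _) h

lemma linM_apply_zero_left {y y' : Y} (h : ∀ i, enum t i ≠ y) (g : Fin 3 → ℂ) :
    linM enum g t t' y y' = 0 := by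
  rw [linM, Matrix.sum_apply]
  refine Finset.sum_eq_zero fun k _ => ?_
  rw [Matrix.smul_apply, cyc_apply_zero_left h, smul_zero]

lemma linM_apply_zero_right {y y' : Y} (h : ∀ i, enum t' i ≠ y') (g : Fin 3 → ℂ) :
    linM enum g t t' y y' = 0 := by
  rw [linM, Matrix.sum_apply]
  refine Finset.sum_eq_zero fun k _ => ?_
  rw [Matrix.smul_apply, cyc_apply_zero_right h, smul_zero]

lemma stdBasis_conjT (a b : Y) :
    (Matrix.single a b (1:ℂ))ᴴ = Matrix.single b a 1 := by
  ext i j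
  simp only [Matrix.conjTranspose_apply, Matrix.single, Matrix.of_apply]
  by_cases h1 : a = j <;> by_cases h2 : b = i <;> simp [h1, h2, and_comm]

lemma cyc_conjTranspose (k : Fin 3) :
    (cyc enum t t' k)ᴴ = cyc enum t' t (-k) := by
  rw [cyc, Matrix.conjTranspose_sum]
  simp_rw [stdBasis_conjT]
  rw [cyc]
  refine Fintype.sum_equiv (Equiv.addRight k) _ _ fun i => ?_
  simp

lemma linM_conjTranspose (g : Fin 3 → ℂ) :
    (linM enum g t t')ᴴ = linM enum (fun k => starRingEnd ℂ (g (-k))) t' t := by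
  rw [linM, Matrix.conjTranspose_sum]
  simp_rw [Matrix.conjTranspose_smul, cyc_conjTranspose]
  rw [linM]
  refine Fintype.sum_equiv (Equiv.neg (Fin 3)) _ _ fun k => ?_
  simp

lemma linM_hw_conjTranspose : (linM enum hw t t')ᴴ = linM enum hw t' t := by
  rw [linM_conjTranspose]
  have h : (fun k : Fin 3 => starRingEnd ℂ (hw (-k))) = hw := funext conj_hw
  rw [h]

end LinM

section SchemeFacts
variable {Y : Type*} [Fintype Y] [DecidableEq Y]

lemma mem_pointFiber_iff {y₀ y : Y} {t : Finset (Y × Y)} :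
    y ∈ pointFiber y₀ t ↔ (y₀, y) ∈ t := by
  simp [pointFiber]

lemma mem_diagRel_iff {p : Y × Y} : p ∈ diagRel Y ↔ p.1 = p.2 := by
  simp [diagRel]

lemma mem_convRel_iff {p : Y × Y} {s : Finset (Y × Y)} :
    p ∈ convRel s ↔ (p.2, p.1) ∈ s := by
  constructor
  · intro h
    obtain ⟨q, hq, hqe⟩ := Finset.mem_image.1 h
    cases hqe
    exact hq
  · intro h
    exact Finset.mem_image.2 ⟨(p.2, p.1), h, rfl⟩

lemma convRel_convRel (s : Finset (Y × Y)) : convRel (convRel s) = s := by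
  ext p
  rw [mem_convRel_iff, mem_convRel_iff]

lemma convRel_diagRel : convRel (diagRel Y) = diagRel Y := by
  ext p
  rw [mem_convRel_iff, mem_diagRel_iff, mem_diagRel_iff]
  exact comm

lemma convRel_ne_diag {u : Finset (Y × Y)} (h : u ≠ diagRel Y) : convRel u ≠ diagRel Y := by
  intro hc
  apply h
  rw [← convRel_convRel u, hc, convRel_diagRel]

lemma adjMat_conjTranspose (u : Finset (Y × Y)) :
    (adjMat u)ᴴ = adjMat (convRel u) := by
  ext i j
  rw [Matrix.conjTranspose_apply, adjMat, adjMat, Matrix.of_apply, Matrix.of_apply]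
  have : ((i, j) ∈ convRel u) ↔ ((j, i) ∈ u) := mem_convRel_iff
  by_cases h : (j, i) ∈ u <;> simp [h, this]

variable {B : AssocScheme Y} {y₀ : Y}

lemma rel_eq_of_mem_fiber {t t' : Finset (Y × Y)} (ht : t ∈ B.rels) (ht' : t' ∈ B.rels)
    {y : Y} (hy : y ∈ pointFiber y₀ t) (hy' : y ∈ pointFiber y₀ t') : t = t' := by
  by_contra hne
  exact Finset.disjoint_left.1 (B.pairwise_disjoint t ht t' ht' hne)
    (mem_pointFiber_iff.1 hy) (mem_pointFiber_iff.1 hy')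

lemma y0_not_mem_fiber {t : Finset (Y × Y)} (ht : t ∈ B.rels) (htd : t ≠ diagRel Y) :
    y₀ ∉ pointFiber y₀ t := by
  intro h
  apply htd
  refine rel_eq_of_mem_fiber ht B.id_mem h ?_
  rw [mem_pointFiber_iff, mem_diagRel_iff]

variable {enum : Finset (Y × Y) → Fin 3 → Y} (hE : IsEnum B y₀ enum)

include hE

lemma enum_inj {t : Finset (Y × Y)} (ht : t ∈ B.rels) (htd : t ≠ diagRel Y) :
    Function.Injective (enum t) := (hE t ht htd).1

lemma enum_mem_fiber {t : Finset (Y × Y)} (ht : t ∈ B.rels) (htd : t ≠ diagRel Y) (i : Fin 3) :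
    enum t i ∈ pointFiber y₀ t := ((hE t ht htd).2 _).2 ⟨i, rfl⟩

lemma enum_surj_fiber {t : Finset (Y × Y)} (ht : t ∈ B.rels) (htd : t ≠ diagRel Y) {y : Y}
    (hy : y ∈ pointFiber y₀ t) : ∃ i, enum t i = y := ((hE t ht htd).2 _).1 hy

lemma enum_ne {t t' : Finset (Y × Y)} (ht : t ∈ B.rels) (htd : t ≠ diagRel Y)
    (ht' : t' ∈ B.rels) (ht'd : t' ≠ diagRel Y) (hne : t ≠ t') (i j : Fin 3) :
    enum t i ≠ enum t' j := by
  intro h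
  exact hne (rel_eq_of_mem_fiber ht ht' (enum_mem_fiber hE ht htd i)
    (h ▸ enum_mem_fiber hE ht' ht'd j))

lemma enum_ne_y0 {t : Finset (Y × Y)} (ht : t ∈ B.rels) (htd : t ≠ diagRel Y) (i : Fin 3) :
    enum t i ≠ y₀ := by
  intro h
  exact y0_not_mem_fiber ht htd (h ▸ enum_mem_fiber hE ht htd i)

lemma not_mem_fiber_imp {t : Finset (Y × Y)} (ht : t ∈ B.rels) (htd : t ≠ diagRel Y) {y : Y}
    (hy : y ∉ pointFiber y₀ t) (i : Fin 3) : enum t i ≠ y := by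
  intro h
  exact hy (h ▸ enum_mem_fiber hE ht htd i)

omit hE

lemma point_cases (B : AssocScheme Y) (y₀ : Y) (y : Y) :
    y = y₀ ∨ ∃ t ∈ B.rels, t ≠ diagRel Y ∧ y ∈ pointFiber y₀ t := by
  obtain ⟨t, ht, hmem⟩ := B.cover (y₀, y)
  by_cases htd : t = diagRel Y
  · left
    subst htd
    exact (mem_diagRel_iff.1 hmem).symm
  · right
    exact ⟨t, ht, htd, mem_pointFiber_iff.2 hmem⟩

include hE

lemma adj_apply_y0_left {u t : Finset (Y × Y)} (hu : u ∈ B.rels)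
    (ht : t ∈ B.rels) (htd : t ≠ diagRel Y) (j : Fin 3) :
    adjMat u y₀ (enum t j) = if u = t then 1 else 0 := by
  rw [adjMat, Matrix.of_apply]
  by_cases h : u = t
  · subst h
    rw [if_pos rfl, if_pos (mem_pointFiber_iff.1 (enum_mem_fiber hE hu htd j))]
  · rw [if_neg h, if_neg]
    intro hc
    exact h (rel_eq_of_mem_fiber hu ht (mem_pointFiber_iff.2 hc)
      (enum_mem_fiber hE ht htd j))

end SchemeFacts

section Coherent
variable {Y : Type*} [Fintype Y] [DecidableEq Y] {B : AssocScheme Y} {y₀ : Y}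

lemma onePointAlg_spec :
    IsCoherent (onePointAlg B y₀) ∧ (∀ s ∈ B.rels, adjMat s ∈ onePointAlg B y₀) ∧
      eps {y₀} ∈ onePointAlg B y₀ := by
  constructor
  · refine ⟨?_, ?_, ?_⟩
    · rw [onePointAlg]
      rw [Algebra.mem_sInf]
      intro p hp
      exact hp.1.1
    · intro M hM
      rw [onePointAlg, Algebra.mem_sInf] at hM ⊢
      intro p hp
      exact hp.1.2.1 M (hM p hp)
    · intro M hM N hN
      rw [onePointAlg, Algebra.mem_sInf] at hM hN ⊢
      intro p hp
      exact hp.1.2.2 M (hM p hp) N (hN p hp)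
  constructor
  · intro s hs
    rw [onePointAlg, Algebra.mem_sInf]
    intro p hp
    exact hp.2.1 s hs
  · rw [onePointAlg, Algebra.mem_sInf]
    intro p hp
    exact hp.2.2

lemma eps_apply (U : Finset Y) (y y' : Y) :
    eps U y y' = if y = y' ∧ y ∈ U then 1 else 0 := by
  rw [eps]
  by_cases h : y = y'
  · subst h
    rw [Matrix.diagonal_apply_eq]
    by_cases h2 : y ∈ U <;> simp [h2]
  · rw [Matrix.diagonal_apply_ne _ h]
    simp [h]

lemma blockOnes_apply (s : Finset (Y × Y)) (y y' : Y) :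
    (adjMat (convRel s) * eps {y₀} * adjMat s) y y'
      = (if y ∈ pointFiber y₀ s then 1 else 0) * (if y' ∈ pointFiber y₀ s then 1 else 0) := by
  rw [Matrix.mul_apply]
  rw [Finset.sum_eq_single y₀]
  · rw [Matrix.mul_apply, Finset.sum_eq_single y₀]
    · rw [eps_apply]
      rw [if_pos ⟨rfl, Finset.mem_singleton_self y₀⟩, mul_one]
      rw [adjMat, adjMat, Matrix.of_apply, Matrix.of_apply]
      have h1 : ((y, y₀) ∈ convRel s) ↔ y ∈ pointFiber y₀ s := by
        rw [mem_convRel_iff, mem_pointFiber_iff]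
      have h2 : ((y₀, y') ∈ s) ↔ y' ∈ pointFiber y₀ s := mem_pointFiber_iff.symm
      by_cases ha : y ∈ pointFiber y₀ s <;> by_cases hb : y' ∈ pointFiber y₀ s <;>
        simp [h1, h2, ha, hb]
    · intro z _ hz
      rw [eps_apply, if_neg, mul_zero]
      intro hc
      exact hz hc.1
    · intro h; exact absurd (Finset.mem_univ _) h
  · intro z _ hz
    rw [Matrix.mul_apply, Finset.sum_eq_single y₀]
    · rw [eps_apply, if_neg, mul_zero, zero_mul]
      intro hc
      exact hz hc.1.symm
    · intro w _ hw
      rw [eps_apply, if_neg, mul_zero]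
      intro hc
      exact hw (Finset.mem_singleton.1 hc.2)
    · intro h; exact absurd (Finset.mem_univ _) h
  · intro h; exact absurd (Finset.mem_univ _) h

lemma epsFiber_mem {s : Finset (Y × Y)} (hs : s ∈ B.rels) :
    eps (pointFiber y₀ s) ∈ onePointAlg B y₀ := by
  obtain ⟨hcoh, hadj, heps⟩ := (onePointAlg_spec (B := B) (y₀ := y₀))
  have hblock : (adjMat (convRel s) * eps {y₀} * adjMat s) ∈ onePointAlg B y₀ :=
    mul_mem (mul_mem (hadj _ (B.conv_mem s hs)) heps) (hadj s hs)
  have hone : (1 : Matrix Y Y ℂ) ∈ onePointAlg B y₀ := one_mem _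
  have := hcoh.2.2 _ hblock _ hone
  have heq : Matrix.hadamard (adjMat (convRel s) * eps {y₀} * adjMat s) (1 : Matrix Y Y ℂ)
      = eps (pointFiber y₀ s) := by
    ext y y'
    rw [Matrix.hadamard_apply, blockOnes_apply, eps_apply, Matrix.one_apply]
    by_cases h : y = y'
    · subst h
      by_cases h2 : y ∈ pointFiber y₀ s <;> simp [h2]
    · simp [h]
  rwa [heq] at this

end Coherent

section BlockForm
variable {Y : Type*} [Fintype Y] [DecidableEq Y] {B : AssocScheme Y} {y₀ : Y}
  {enum : Finset (Y × Y) → Fin 3 → Y}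

/-- support size of a matrix -/
noncomputable def suppC (D : Matrix Y Y ℂ) : ℕ :=
  (Finset.univ.filter fun p : Y × Y => D p.1 p.2 ≠ 0).card

lemma block_decomp (hE : IsEnum B y₀ enum) (hwo : IsWellOrdering B y₀ enum)
    {s t : Finset (Y × Y)} (hs : s ∈ B.rels) (hsd : s ≠ diagRel Y)
    (ht : t ∈ B.rels) (htd : t ≠ diagRel Y) :
    ∀ n : ℕ, ∀ D : Matrix Y Y ℂ, suppC D ≤ n → D ∈ onePointAlg B y₀ → IsZeroOne D →
    (∀ y y', D y y' ≠ 0 → y ∈ pointFiber y₀ s ∧ y' ∈ pointFiber y₀ t) →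
    ∃ g : Fin 3 → ℂ, ∀ i j, D (enum s i) (enum t j) = g (j - i) := by
  intro n
  induction n with
  | zero =>
    intro D hcard hmem hzo hsupp
    refine ⟨0, fun i j => ?_⟩
    have h0 : suppC D = 0 := Nat.le_zero.1 hcard
    rw [suppC, Finset.card_eq_zero] at h0
    have := Finset.filter_eq_empty_iff.1 h0 (Finset.mem_univ ((enum s i, enum t j)))
    simpa using this
  | succ n ih =>
    intro D hcard hmem hzo hsupp
    by_cases hD0 : D = 0
    · exact ⟨0, fun i j => by rw [hD0]; rfl⟩
    · have hPex : ∃ k, ∃ C : Matrix Y Y ℂ,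
          (C ∈ onePointAlg B y₀ ∧ IsZeroOne C ∧ C ≠ 0 ∧
            (∀ y y', C y y' = 1 → D y y' = 1)) ∧ suppC C = k :=
        ⟨suppC D, D, ⟨hmem, hzo, hD0, fun _ _ h => h⟩, rfl⟩
      obtain ⟨C, ⟨hCmem, hCzo, hC0, hCle⟩, hCk⟩ := Nat.find_spec hPex
      have hbasic : IsBasicMatrix (onePointAlg B y₀) C := by
        refine ⟨hCmem, hCzo, hC0, ?_⟩
        intro C' hC'mem hC'zo hC'le
        by_cases hC'0 : C' = 0
        · exact Or.inl hC'0
        · right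
          have hC'D : ∀ y y', C' y y' = 1 → D y y' = 1 :=
            fun y y' h => hCle y y' (hC'le y y' h)
          have hkle : Nat.find hPex ≤ suppC C' :=
            Nat.find_min' hPex ⟨C', ⟨hC'mem, hC'zo, hC'0, hC'D⟩, rfl⟩
          have hsub : (Finset.univ.filter fun p : Y × Y => C' p.1 p.2 ≠ 0)
              ⊆ (Finset.univ.filter fun p : Y × Y => C p.1 p.2 ≠ 0) := by
            intro p hp
            rw [Finset.mem_filter] at hp ⊢
            refine ⟨Finset.mem_univ _, ?_⟩
            have h1 : C' p.1 p.2 = 1 := (hC'zo p.1 p.2).resolve_left hp.2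
            rw [hC'le p.1 p.2 h1]
            exact one_ne_zero
          have hcards : (Finset.univ.filter fun p : Y × Y => C p.1 p.2 ≠ 0).card
              ≤ (Finset.univ.filter fun p : Y × Y => C' p.1 p.2 ≠ 0).card := by
            rw [show (Finset.univ.filter fun p : Y × Y => C p.1 p.2 ≠ 0).card = suppC C from rfl,
              hCk]
            exact hkle
          have heq := Finset.eq_of_subset_of_card_le hsub hcards
          ext y y'
          have hmemiff : ((y, y') ∈ (Finset.univ.filter fun p : Y × Y => C' p.1 p.2 ≠ 0))
              ↔ ((y, y') ∈ (Finset.univ.filter fun p : Y × Y => C p.1 p.2 ≠ 0)) := by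
            rw [heq]
          simp only [Finset.mem_filter, Finset.mem_univ, true_and] at hmemiff
          rcases hC'zo y y' with h|h <;> rcases hCzo y y' with h2|h2
          · rw [h, h2]
          · exfalso
            have := hmemiff.2 (by rw [h2]; exact one_ne_zero)
            exact this h
          · exfalso
            have := hmemiff.1 (by rw [h]; exact one_ne_zero)
            exact this h2
          · rw [h, h2]
      have hnz : ∃ y y', C y y' ≠ 0 := by
        by_contra hcon
        push_neg at hcon
        exact hC0 (by ext y y'; simpa using hcon y y')
      obtain ⟨ynz, y'nz, hnze⟩ := hnz
      have h1 : C ynz y'nz = 1 := (hCzo _ _).resolve_left hnze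
      have hD1 : D ynz y'nz = 1 := hCle _ _ h1
      have hblock := hsupp _ _ (by rw [hD1]; exact one_ne_zero)
      obtain ⟨i0, hi0⟩ := enum_surj_fiber hE hs hsd hblock.1
      obtain ⟨j0, hj0⟩ := enum_surj_fiber hE ht htd hblock.2
      obtain ⟨k, hk⟩ := hwo.2 s hs hsd t ht htd C hbasic
        ⟨i0, j0, by rw [hi0, hj0]; exact hnze⟩
      set D' := D - C with hD'def
      have hD'app : ∀ y y', D' y y' = D y y' - C y y' := fun y y' => rfl
      have hD'mem : D' ∈ onePointAlg B y₀ := sub_mem hmem hCmem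
      have hCD0 : ∀ y y', D y y' = 0 → C y y' = 0 := by
        intro y y' h
        rcases hCzo y y' with h2|h2
        · exact h2
        · exfalso
          rw [hCle y y' h2] at h
          exact one_ne_zero h
      have hD'zo : IsZeroOne D' := by
        intro y y'
        rw [hD'app]
        rcases hCzo y y' with h|h
        · rw [h, sub_zero]; exact hzo y y'
        · rw [h, hCle y y' h, sub_self]; exact Or.inl rfl
      have hD'ne : ∀ y y', D' y y' ≠ 0 → D y y' ≠ 0 := by
        intro y y' hne hD0e
        rw [hD'app, hD0e, hCD0 y y' hD0e, sub_zero] at hne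
        exact hne rfl
      have hD'supp : ∀ y y', D' y y' ≠ 0 → y ∈ pointFiber y₀ s ∧ y' ∈ pointFiber y₀ t :=
        fun y y' h => hsupp y y' (hD'ne y y' h)
      have hssub : (Finset.univ.filter fun p : Y × Y => D' p.1 p.2 ≠ 0)
          ⊂ (Finset.univ.filter fun p : Y × Y => D p.1 p.2 ≠ 0) := by
        rw [Finset.ssubset_iff_of_subset]
        · refine ⟨(ynz, y'nz), ?_, ?_⟩
          · rw [Finset.mem_filter]
            exact ⟨Finset.mem_univ _, by rw [hD1]; exact one_ne_zero⟩
          · rw [Finset.mem_filter]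
            rintro ⟨-, hcon⟩
            apply hcon
            rw [hD'app, hD1, h1, sub_self]
        · intro p hp
          rw [Finset.mem_filter] at hp ⊢
          exact ⟨Finset.mem_univ _, hD'ne p.1 p.2 hp.2⟩
      have hcard' : suppC D' ≤ n := by
        have h2 : suppC D' < suppC D := Finset.card_lt_card hssub
        omega
      obtain ⟨g', hg'⟩ := ih D' hcard' hD'mem hD'zo hD'supp
      refine ⟨fun d => g' d + if d = k then 1 else 0, fun i j => ?_⟩
      have hsplit : D (enum s i) (enum t j)
          = D' (enum s i) (enum t j) + C (enum s i) (enum t j) := by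
        rw [hD'app]; ring
      rw [hsplit, hg' i j, hk i j]
      congr 1
      by_cases hc : j = i + k
      · rw [if_pos hc, if_pos (sub_eq_iff_eq_add'.2 hc)]
      · rw [if_neg hc, if_neg (fun h => hc (sub_eq_iff_eq_add'.1 h))]

lemma block_form (hE : IsEnum B y₀ enum) (hwo : IsWellOrdering B y₀ enum)
    {u s t : Finset (Y × Y)} (hu : u ∈ B.rels)
    (hs : s ∈ B.rels) (hsd : s ≠ diagRel Y) (ht : t ∈ B.rels) (htd : t ≠ diagRel Y) :
    ∃ g : Fin 3 → ℂ, ∀ i j, adjMat u (enum s i) (enum t j) = g (j - i) := by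
  obtain ⟨hcoh, hadj, heps⟩ := (onePointAlg_spec (B := B) (y₀ := y₀))
  set D := eps (pointFiber y₀ s) * adjMat u * eps (pointFiber y₀ t) with hDdef
  have hDapp : ∀ y y', D y y'
      = (if y ∈ pointFiber y₀ s then 1 else 0) * adjMat u y y'
        * (if y' ∈ pointFiber y₀ t then 1 else 0) := by
    intro y y'
    rw [hDdef, eps, eps, Matrix.mul_diagonal, Matrix.diagonal_mul]
  have hDmem : D ∈ onePointAlg B y₀ :=
    mul_mem (mul_mem (epsFiber_mem hs) (hadj u hu)) (epsFiber_mem ht)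
  have hadjzo : ∀ y y', adjMat u y y' = 0 ∨ adjMat u y y' = 1 := by
    intro y y'
    rw [adjMat, Matrix.of_apply]
    by_cases h : (y, y') ∈ u
    · exact Or.inr (if_pos h)
    · exact Or.inl (if_neg h)
  have hDzo : IsZeroOne D := by
    intro y y'
    rw [hDapp]
    by_cases h1 : y ∈ pointFiber y₀ s <;> by_cases h2 : y' ∈ pointFiber y₀ t <;>
      simp [h1, h2, hadjzo y y']
  have hDsupp : ∀ y y', D y y' ≠ 0 → y ∈ pointFiber y₀ s ∧ y' ∈ pointFiber y₀ t := by
    intro y y' h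
    by_cases h1 : y ∈ pointFiber y₀ s <;> by_cases h2 : y' ∈ pointFiber y₀ t <;>
      [exact ⟨h1, h2⟩; skip; skip; skip] <;>
      · exfalso; apply h; rw [hDapp]; simp [h1, h2]
  obtain ⟨g, hg⟩ := block_decomp hE hwo hs hsd ht htd (suppC D) D le_rfl hDmem hDzo hDsupp
  refine ⟨g, fun i j => ?_⟩
  rw [← hg i j, hDapp]
  rw [if_pos (enum_mem_fiber hE hs hsd i), if_pos (enum_mem_fiber hE ht htd j)]
  ring

end BlockForm

section KeyMul
variable {Y : Type*} [Fintype Y] [DecidableEq Y] {B : AssocScheme Y} {y₀ : Y}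
  {enum : Finset (Y × Y) → Fin 3 → Y}

lemma mul_linM_apply {t t' : Finset (Y × Y)} (hinj : Function.Injective (enum t))
    (M : Matrix Y Y ℂ) (g : Fin 3 → ℂ) (y y' : Y) :
    (M * linM enum g t t') y y'
      = ∑ j : Fin 3, M y (enum t j) * linM enum g t t' (enum t j) y' := by
  rw [Matrix.mul_apply]
  rw [← Finset.sum_subset (Finset.subset_univ ((Finset.univ : Finset (Fin 3)).image (enum t)))
    (fun z _ hz => by
      have hne : ∀ i, enum t i ≠ z := fun i hi =>
        hz (Finset.mem_image.2 ⟨i, Finset.mem_univ _, hi⟩)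
      rw [linM_apply_zero_left hne, mul_zero])]
  rw [Finset.sum_image (fun a _ b _ h => hinj h)]

lemma adj_mul_Mt (hE : IsEnum B y₀ enum) (hwo : IsWellOrdering B y₀ enum)
    {u t t' : Finset (Y × Y)} (hu : u ∈ B.rels)
    (ht : t ∈ B.rels) (htd : t ≠ diagRel Y) (ht' : t' ∈ B.rels) (ht'd : t' ≠ diagRel Y) :
    ∃ c : Finset (Y × Y) → ℂ,
      adjMat u * linM enum hw t t'
        = ∑ s ∈ B.rels.erase (diagRel Y), c s • linM enum hw s t' := by
  classical
  have hgex : ∀ s ∈ B.rels.erase (diagRel Y),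
      ∃ g : Fin 3 → ℂ, ∀ i j, adjMat u (enum s i) (enum t j) = g (j - i) := by
    intro s hsm
    exact block_form hE hwo hu (Finset.mem_of_mem_erase hsm) (Finset.ne_of_mem_erase hsm)
      ht htd
  choose! g hg using hgex
  refine ⟨fun s => g s 0 + omega3 * g s 1 + omega3 ^ 2 * g s 2, ?_⟩
  ext y y'
  rw [mul_linM_apply (enum_inj hE ht htd)]
  have hRapp : (∑ s ∈ B.rels.erase (diagRel Y),
        (g s 0 + omega3 * g s 1 + omega3 ^ 2 * g s 2) • linM enum hw s t') y y'
      = ∑ s ∈ B.rels.erase (diagRel Y),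
        (g s 0 + omega3 * g s 1 + omega3 ^ 2 * g s 2) * linM enum hw s t' y y' := by
    rw [Matrix.sum_apply]
    refine Finset.sum_congr rfl fun s _ => ?_
    rw [Matrix.smul_apply, smul_eq_mul]
  rw [hRapp]
  rcases point_cases B y₀ y with hy | ⟨s₀, hs₀, hs₀d, hy⟩
  · subst hy
    have hR0 : ∑ s ∈ B.rels.erase (diagRel Y),
        (g s 0 + omega3 * g s 1 + omega3 ^ 2 * g s 2) * linM enum hw s t' y y' = 0 := by
      refine Finset.sum_eq_zero fun s hsm => ?_
      rw [linM_apply_zero_left (fun i => enum_ne_y0 hE (Finset.mem_of_mem_erase hsm)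
        (Finset.ne_of_mem_erase hsm) i), mul_zero]
    rw [hR0]
    have hL : ∀ j : Fin 3, adjMat u y (enum t j) * linM enum hw t t' (enum t j) y'
        = (if u = t then 1 else 0) * linM enum hw t t' (enum t j) y' := by
      intro j
      rw [adj_apply_y0_left hE hu ht htd]
    simp_rw [hL]
    by_cases hut : u = t
    · simp only [if_pos hut, one_mul]
      by_cases hy' : ∀ m, enum t' m ≠ y'
      · exact Finset.sum_eq_zero fun j _ => linM_apply_zero_right hy' hw
      · push_neg at hy'
        obtain ⟨m, hm⟩ := hy'
        rw [← hm]
        have : ∀ j : Fin 3, linM enum hw t t' (enum t j) (enum t' m) = hw (m - j) :=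
          fun j => linM_apply_eq (enum_inj hE ht htd) (enum_inj hE ht' ht'd) hw j m
        simp_rw [this]
        rw [Fintype.sum_equiv (Equiv.subLeft m) (fun j => hw (m - j)) hw (fun j => rfl)]
        exact hw_sum
    · simp only [if_neg hut, zero_mul]
      exact Finset.sum_const_zero
  · obtain ⟨i₀, hi₀⟩ := enum_surj_fiber hE hs₀ hs₀d hy
    rw [← hi₀]
    have hs₀m : s₀ ∈ B.rels.erase (diagRel Y) := Finset.mem_erase.2 ⟨hs₀d, hs₀⟩
    by_cases hy' : ∀ m, enum t' m ≠ y'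
    · have hL0 : ∑ j : Fin 3, adjMat u (enum s₀ i₀) (enum t j)
          * linM enum hw t t' (enum t j) y' = 0 :=
        Finset.sum_eq_zero fun j _ => by rw [linM_apply_zero_right hy' hw, mul_zero]
      have hR0 : ∑ s ∈ B.rels.erase (diagRel Y),
          (g s 0 + omega3 * g s 1 + omega3 ^ 2 * g s 2)
            * linM enum hw s t' (enum s₀ i₀) y' = 0 :=
        Finset.sum_eq_zero fun s hsm => by rw [linM_apply_zero_right hy' hw, mul_zero]
      rw [hL0, hR0]
    · push_neg at hy'
      obtain ⟨m, hm⟩ := hy'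
      rw [← hm]
      have hLterm : ∀ j : Fin 3, adjMat u (enum s₀ i₀) (enum t j)
          * linM enum hw t t' (enum t j) (enum t' m)
          = g s₀ (j - i₀) * hw (m - j) := by
        intro j
        rw [hg s₀ hs₀m i₀ j,
          linM_apply_eq (enum_inj hE ht htd) (enum_inj hE ht' ht'd) hw j m]
      simp_rw [hLterm]
      rw [Finset.sum_eq_single_of_mem s₀ hs₀m (fun s hsm hne => by
        rw [linM_apply_zero_left (fun i => enum_ne hE (Finset.mem_of_mem_erase hsm)
          (Finset.ne_of_mem_erase hsm) hs₀ hs₀d hne i i₀) hw, mul_zero])]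
      rw [linM_apply_eq (enum_inj hE hs₀ hs₀d) (enum_inj hE ht' ht'd) hw i₀ m]
      have hre : ∑ j : Fin 3, g s₀ (j - i₀) * hw (m - j)
          = ∑ d : Fin 3, g s₀ d * hw ((m - i₀) - d) := by
        refine (Fintype.sum_equiv (Equiv.addLeft i₀)
          (fun d => g s₀ d * hw ((m - i₀) - d))
          (fun j => g s₀ (j - i₀) * hw (m - j)) (fun d => ?_)).symm
        simp only [Equiv.coe_addLeft]
        rw [add_sub_cancel_left, sub_sub]
      rw [hre]
      have := convl_hw (g s₀) (m - i₀)
      rw [convl] at this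
      rw [this]

end KeyMul

section KeyMul2
variable {Y : Type*} [Fintype Y] [DecidableEq Y] {B : AssocScheme Y} {y₀ : Y}
  {enum : Finset (Y × Y) → Fin 3 → Y}

lemma Mt_mul_adj (hE : IsEnum B y₀ enum) (hwo : IsWellOrdering B y₀ enum)
    {u t t' : Finset (Y × Y)} (hu : u ∈ B.rels)
    (ht : t ∈ B.rels) (htd : t ≠ diagRel Y) (ht' : t' ∈ B.rels) (ht'd : t' ≠ diagRel Y) :
    ∃ c : Finset (Y × Y) → ℂ,
      linM enum hw t t' * adjMat u
        = ∑ s ∈ B.rels.erase (diagRel Y), c s • linM enum hw t s := by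
  obtain ⟨c, hc⟩ := adj_mul_Mt hE hwo (B.conv_mem u hu) ht' ht'd ht htd
  refine ⟨fun s => starRingEnd ℂ (c s), ?_⟩
  have h1 : (linM enum hw t t' * adjMat u)ᴴ = adjMat (convRel u) * linM enum hw t' t := by
    rw [Matrix.conjTranspose_mul, linM_hw_conjTranspose, adjMat_conjTranspose]
  have h2 := congrArg Matrix.conjTranspose (h1.trans hc)
  rw [Matrix.conjTranspose_conjTranspose] at h2
  rw [h2, Matrix.conjTranspose_sum]
  refine Finset.sum_congr rfl fun s _ => ?_
  rw [Matrix.conjTranspose_smul, linM_hw_conjTranspose]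
  rfl

lemma epsY0_mul_Mt (hE : IsEnum B y₀ enum) {t t' : Finset (Y × Y)}
    (ht : t ∈ B.rels) (htd : t ≠ diagRel Y) :
    eps ({y₀} : Finset Y) * linM enum hw t t' = 0 := by
  ext y y'
  rw [eps, Matrix.diagonal_mul, Matrix.zero_apply]
  by_cases h : y = y₀
  · subst h
    rw [linM_apply_zero_left (fun i => enum_ne_y0 hE ht htd i), mul_zero]
  · rw [if_neg (fun hc => h (Finset.mem_singleton.1 hc)), zero_mul]

lemma Mt_mul_epsY0 (hE : IsEnum B y₀ enum) {t t' : Finset (Y × Y)}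
    (ht' : t' ∈ B.rels) (ht'd : t' ≠ diagRel Y) :
    linM enum hw t t' * eps ({y₀} : Finset Y) = 0 := by
  ext y y'
  rw [eps, Matrix.mul_diagonal, Matrix.zero_apply]
  by_cases h : y' = y₀
  · subst h
    rw [linM_apply_zero_right (fun i => enum_ne_y0 hE ht' ht'd i), zero_mul]
  · rw [if_neg (fun hc => h (Finset.mem_singleton.1 hc)), mul_zero]

lemma epsFiber_mul_Mt (hE : IsEnum B y₀ enum) {u t t' : Finset (Y × Y)}
    (hu : u ∈ B.rels) (hud : u ≠ diagRel Y) (ht : t ∈ B.rels) (htd : t ≠ diagRel Y) :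
    eps (pointFiber y₀ u) * linM enum hw t t'
      = if u = t then linM enum hw t t' else 0 := by
  ext y y'
  rw [eps, Matrix.diagonal_mul]
  by_cases hut : u = t
  · subst hut
    rw [if_pos rfl]
    by_cases hy : y ∈ pointFiber y₀ u
    · rw [if_pos hy, one_mul]
    · rw [if_neg hy, zero_mul,
        linM_apply_zero_left (not_mem_fiber_imp hE hu hud hy)]
  · rw [if_neg hut, Matrix.zero_apply]
    by_cases hy : y ∈ pointFiber y₀ u
    · have hnt : y ∉ pointFiber y₀ t := fun hc => hut (rel_eq_of_mem_fiber hu ht hy hc)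
      rw [linM_apply_zero_left (not_mem_fiber_imp hE ht htd hnt), mul_zero]
    · rw [if_neg hy, zero_mul]

lemma Mt_mul_epsFiber (hE : IsEnum B y₀ enum) {u t t' : Finset (Y × Y)}
    (hu : u ∈ B.rels) (hud : u ≠ diagRel Y) (ht' : t' ∈ B.rels) (ht'd : t' ≠ diagRel Y) :
    linM enum hw t t' * eps (pointFiber y₀ u)
      = if u = t' then linM enum hw t t' else 0 := by
  ext y y'
  rw [eps, Matrix.mul_diagonal]
  by_cases hut : u = t'
  · subst hut
    rw [if_pos rfl]
    by_cases hy : y' ∈ pointFiber y₀ u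
    · rw [if_pos hy, mul_one]
    · rw [if_neg hy, mul_zero,
        linM_apply_zero_right (not_mem_fiber_imp hE hu hud hy)]
  · rw [if_neg hut, Matrix.zero_apply]
    by_cases hy : y' ∈ pointFiber y₀ u
    · have hnt : y' ∉ pointFiber y₀ t' := fun hc => hut (rel_eq_of_mem_fiber hu ht' hy hc)
      rw [linM_apply_zero_right (not_mem_fiber_imp hE ht' ht'd hnt), zero_mul]
    · rw [if_neg hy, mul_zero]

end KeyMul2

section XSide
variable {X : Type*} [Fintype X] [DecidableEq X]

lemma allOnes_conjTranspose : (allOnes X)ᴴ = allOnes X := by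
  ext i j
  simp [allOnes, Matrix.conjTranspose_apply]

lemma allOnes_mul_allOnes :
    allOnes X * allOnes X = (Fintype.card X : ℂ) • allOnes X := by
  ext i j
  simp [allOnes, Matrix.mul_apply, Finset.card_univ]

lemma adj_mul_allOnes (A : AssocScheme X) {s : Finset (X × X)} (hs : s ∈ A.rels) :
    ∃ c : ℂ, adjMat s * allOnes X = c • allOnes X := by
  rcases isEmpty_or_nonempty X with hX | hX
  · exact ⟨0, by ext i j; exact (IsEmpty.false i).elim⟩
  · set x₀ := Classical.arbitrary X
    refine ⟨((Finset.univ.filter fun z => (x₀, z) ∈ s).card : ℂ), ?_⟩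
    have hcount : ∀ x : X, (Finset.univ.filter fun z => (x, z) ∈ s).card
        = (Finset.univ.filter fun z => (x₀, z) ∈ s).card := by
      intro x
      have h1 : ∀ xx : X, (Finset.univ.filter fun z => (xx, z) ∈ s)
          = (Finset.univ.filter fun z => (xx, z) ∈ s ∧ (z, xx) ∈ convRel s) := by
        intro xx
        ext z
        simp only [Finset.mem_filter, Finset.mem_univ, true_and]
        have : ((z, xx) ∈ convRel s) ↔ ((xx, z) ∈ s) := mem_convRel_iff
        tauto
      rw [h1 x, h1 x₀]
      exact A.pconst s hs (convRel s) (A.conv_mem s hs) (diagRel X) A.id_mem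
        (x, x) (mem_diagRel_iff.2 rfl) (x₀, x₀) (mem_diagRel_iff.2 rfl)
    ext x x'
    rw [Matrix.mul_apply, Matrix.smul_apply]
    have hterm : ∀ z : X, adjMat s x z * allOnes X z x'
        = (if (x, z) ∈ s then (1:ℂ) else 0) := by
      intro z
      rw [adjMat, allOnes, Matrix.of_apply, Matrix.of_apply, mul_one]
    simp_rw [hterm]
    rw [Finset.sum_boole, hcount x]
    rw [allOnes, Matrix.of_apply, smul_eq_mul, mul_one]

lemma allOnes_mul_adj (A : AssocScheme X) {s : Finset (X × X)} (hs : s ∈ A.rels) :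
    ∃ c : ℂ, allOnes X * adjMat s = c • allOnes X := by
  obtain ⟨c, hc⟩ := adj_mul_allOnes A (A.conv_mem s hs)
  refine ⟨starRingEnd ℂ c, ?_⟩
  have h1 : (allOnes X * adjMat s)ᴴ = adjMat (convRel s) * allOnes X := by
    rw [Matrix.conjTranspose_mul, allOnes_conjTranspose, adjMat_conjTranspose]
  have h2 := congrArg Matrix.conjTranspose (h1.trans hc)
  rw [Matrix.conjTranspose_conjTranspose] at h2
  rw [h2, Matrix.conjTranspose_smul, allOnes_conjTranspose]
  rfl

end XSide

section GBridge
variable {X Y : Type*} [Fintype X] [DecidableEq X] [Fintype Y] [DecidableEq Y]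
  {B : AssocScheme Y} {y₀ : Y} {enum : Finset (Y × Y) → Fin 3 → Y}

lemma Gmat'_eq (t t' : Finset (Y × Y)) :
    Gmat' X enum t t' = (3 * (Fintype.card X : ℂ))⁻¹ • (allOnes X ⊗ₖ linM enum hw t t') := by
  rw [Gmat', linM, Fin.sum_univ_three, hw_zero, hw_one, hw_two, one_smul]

lemma X_nonempty (A : AssocScheme X) : Nonempty X := by
  obtain ⟨p, hp⟩ := A.nonempty_mem _ A.id_mem
  exact ⟨p.1⟩

lemma cardX_ne_zero (A : AssocScheme X) : (Fintype.card X : ℂ) ≠ 0 := by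
  have := X_nonempty A
  have h := Fintype.card_ne_zero (α := X)
  exact_mod_cast Nat.cast_ne_zero.2 h

lemma Gmat'_mul_Gmat' (hE : IsEnum B y₀ enum) (hX : (Fintype.card X : ℂ) ≠ 0)
    {t t' t''' t'' : Finset (Y × Y)}
    (ht : t ∈ B.rels) (htd : t ≠ diagRel Y) (ht' : t' ∈ B.rels) (ht'd : t' ≠ diagRel Y)
    (ht''' : t''' ∈ B.rels) (ht'''d : t''' ≠ diagRel Y)
    (ht'' : t'' ∈ B.rels) (ht''d : t'' ≠ diagRel Y) :
    Gmat' X enum t t' * Gmat' X enum t''' t''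
      = if t' = t''' then Gmat' X enum t t'' else 0 := by
  by_cases h : t' = t'''
  · subst h
    rw [if_pos rfl, Gmat'_eq, Gmat'_eq, Gmat'_eq]
    rw [Matrix.smul_mul, Matrix.mul_smul, ← Matrix.mul_kronecker_mul,
      allOnes_mul_allOnes, linM_mul_linM (enum_inj hE ht' ht'd)]
    have hconv : linM enum (convl hw hw) t t'' = (3:ℂ) • linM enum hw t t'' := by
      rw [linM, linM, Finset.smul_sum]
      refine Finset.sum_congr rfl fun k _ => ?_
      rw [convl_hw_hw, mul_smul]
    rw [hconv]
    rw [Matrix.smul_kronecker, Matrix.kronecker_smul]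
    rw [smul_smul, smul_smul, smul_smul]
    congr 1
    field_simp
  · rw [if_neg h, Gmat'_eq, Gmat'_eq]
    rw [Matrix.smul_mul, Matrix.mul_smul, ← Matrix.mul_kronecker_mul,
      linM_mul_linM_zero (enum_ne hE ht' ht'd ht''' ht'''d h),
      Matrix.kronecker_zero, smul_zero, smul_zero]

end GBridge

section Span
variable {X Y : Type*} [Fintype X] [DecidableEq X] [Fintype Y] [DecidableEq Y]
  {A : AssocScheme X} {B : AssocScheme Y} {y₀ : Y} {x₀ : X}
  {enum : Finset (Y × Y) → Fin 3 → Y}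

lemma kron_sum_right {α : Type*} (s : Finset α) (f : α → Matrix Y Y ℂ)
    (Ax : Matrix X X ℂ) : Ax ⊗ₖ (∑ i ∈ s, f i) = ∑ i ∈ s, Ax ⊗ₖ f i :=
  map_sum (AddMonoidHom.mk' (fun N => Ax ⊗ₖ N) (Matrix.kronecker_add Ax)) f s

lemma Gmem {t t' : Finset (Y × Y)} (htm : t ∈ B.rels.erase (diagRel Y))
    (ht'm : t' ∈ B.rels.erase (diagRel Y)) :
    Gmat' X enum t t' ∈ Submodule.span ℂ (GmatSet' X B enum) :=
  Submodule.subset_span ⟨t, htm, t', ht'm, rfl⟩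

lemma JMt_mem (hX : (3 * (Fintype.card X : ℂ)) ≠ 0) {t t' : Finset (Y × Y)}
    (htm : t ∈ B.rels.erase (diagRel Y)) (ht'm : t' ∈ B.rels.erase (diagRel Y)) :
    allOnes X ⊗ₖ linM enum hw t t' ∈ Submodule.span ℂ (GmatSet' X B enum) := by
  have heq : allOnes X ⊗ₖ linM enum hw t t'
      = (3 * (Fintype.card X : ℂ)) • Gmat' X enum t t' := by
    rw [Gmat'_eq, smul_smul, mul_inv_cancel₀ hX, one_smul]
  rw [heq]
  exact Submodule.smul_mem _ _ (Gmem htm ht'm)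

lemma gen_action (hE : IsEnum B y₀ enum) (hwo : IsWellOrdering B y₀ enum)
    (hX : (3 * (Fintype.card X : ℂ)) ≠ 0)
    {a : Matrix (X × Y) (X × Y) ℂ} (ha : a ∈ wreathGens A B x₀ y₀)
    {t t' : Finset (Y × Y)} (htm : t ∈ B.rels.erase (diagRel Y))
    (ht'm : t' ∈ B.rels.erase (diagRel Y)) :
    a * Gmat' X enum t t' ∈ Submodule.span ℂ (GmatSet' X B enum) ∧
    Gmat' X enum t t' * a ∈ Submodule.span ℂ (GmatSet' X B enum) := by
  obtain ⟨htd, ht⟩ := Finset.mem_erase.1 htm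
  obtain ⟨ht'd, ht'⟩ := Finset.mem_erase.1 ht'm
  rcases ha with ((⟨s, hs, rfl⟩ | ⟨s, hs, rfl⟩) | ⟨u, hu, hud, rfl⟩) | ⟨u, hu, hud, rfl⟩
  · -- adjMat s ⊗ₖ 1
    constructor
    · obtain ⟨c, hc⟩ := adj_mul_allOnes A hs
      have heq : (adjMat s ⊗ₖ (1 : Matrix Y Y ℂ)) * Gmat' X enum t t'
          = c • Gmat' X enum t t' := by
        rw [Gmat'_eq, Matrix.mul_smul, ← Matrix.mul_kronecker_mul, hc, one_mul,
          Matrix.smul_kronecker, smul_comm]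
      rw [heq]
      exact Submodule.smul_mem _ _ (Gmem htm ht'm)
    · obtain ⟨c, hc⟩ := allOnes_mul_adj A hs
      have heq : Gmat' X enum t t' * (adjMat s ⊗ₖ (1 : Matrix Y Y ℂ))
          = c • Gmat' X enum t t' := by
        rw [Gmat'_eq, Matrix.smul_mul, ← Matrix.mul_kronecker_mul, hc, mul_one,
          Matrix.smul_kronecker, smul_comm]
      rw [heq]
      exact Submodule.smul_mem _ _ (Gmem htm ht'm)
  · -- eps (pointFiber x₀ s) ⊗ₖ eps {y₀}
    constructor
    · have heq : (eps (pointFiber x₀ s) ⊗ₖ eps ({y₀} : Finset Y)) * Gmat' X enum t t'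
          = 0 := by
        rw [Gmat'_eq, Matrix.mul_smul, ← Matrix.mul_kronecker_mul,
          epsY0_mul_Mt hE ht htd, Matrix.kronecker_zero, smul_zero]
      rw [heq]
      exact Submodule.zero_mem _
    · have heq : Gmat' X enum t t' * (eps (pointFiber x₀ s) ⊗ₖ eps ({y₀} : Finset Y))
          = 0 := by
        rw [Gmat'_eq, Matrix.smul_mul, ← Matrix.mul_kronecker_mul,
          Mt_mul_epsY0 hE ht' ht'd, Matrix.kronecker_zero, smul_zero]
      rw [heq]
      exact Submodule.zero_mem _
  · -- allOnes X ⊗ₖ adjMat u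
    constructor
    · obtain ⟨c, hc⟩ := adj_mul_Mt hE hwo hu ht htd ht' ht'd
      have heq : (allOnes X ⊗ₖ adjMat u) * Gmat' X enum t t'
          = (3 * (Fintype.card X : ℂ))⁻¹ • ((Fintype.card X : ℂ) •
            (∑ s ∈ B.rels.erase (diagRel Y), c s • (allOnes X ⊗ₖ linM enum hw s t'))) := by
        rw [Gmat'_eq, Matrix.mul_smul, ← Matrix.mul_kronecker_mul,
          allOnes_mul_allOnes, hc, Matrix.smul_kronecker, kron_sum_right]
        congr 1
        congr 1
        refine Finset.sum_congr rfl fun s _ => ?_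
        rw [Matrix.kronecker_smul]
      rw [heq]
      refine Submodule.smul_mem _ _ (Submodule.smul_mem _ _ (Submodule.sum_mem _
        fun s hsm => Submodule.smul_mem _ _ (JMt_mem hX hsm ht'm)))
    · obtain ⟨c, hc⟩ := Mt_mul_adj hE hwo hu ht htd ht' ht'd
      have heq : Gmat' X enum t t' * (allOnes X ⊗ₖ adjMat u)
          = (3 * (Fintype.card X : ℂ))⁻¹ • ((Fintype.card X : ℂ) •
            (∑ s ∈ B.rels.erase (diagRel Y), c s • (allOnes X ⊗ₖ linM enum hw t s))) := by
        rw [Gmat'_eq, Matrix.smul_mul, ← Matrix.mul_kronecker_mul,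
          allOnes_mul_allOnes, hc, Matrix.smul_kronecker, kron_sum_right]
        congr 1
        congr 1
        refine Finset.sum_congr rfl fun s _ => ?_
        rw [Matrix.kronecker_smul]
      rw [heq]
      refine Submodule.smul_mem _ _ (Submodule.smul_mem _ _ (Submodule.sum_mem _
        fun s hsm => Submodule.smul_mem _ _ (JMt_mem hX htm hsm)))
  · -- (1 : Matrix X X ℂ) ⊗ₖ eps (pointFiber y₀ u)
    constructor
    · have heq : ((1 : Matrix X X ℂ) ⊗ₖ eps (pointFiber y₀ u)) * Gmat' X enum t t'
          = (3 * (Fintype.card X : ℂ))⁻¹ •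
            (allOnes X ⊗ₖ (if u = t then linM enum hw t t' else 0)) := by
        rw [Gmat'_eq, Matrix.mul_smul, ← Matrix.mul_kronecker_mul, one_mul,
          epsFiber_mul_Mt hE hu hud ht htd]
      rw [heq]
      by_cases h : u = t
      · rw [if_pos h, ← Gmat'_eq]
        exact Gmem htm ht'm
      · rw [if_neg h, Matrix.kronecker_zero, smul_zero]
        exact Submodule.zero_mem _
    · have heq : Gmat' X enum t t' * ((1 : Matrix X X ℂ) ⊗ₖ eps (pointFiber y₀ u))
          = (3 * (Fintype.card X : ℂ))⁻¹ •
            (allOnes X ⊗ₖ (if u = t' then linM enum hw t t' else 0)) := by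
        rw [Gmat'_eq, Matrix.smul_mul, ← Matrix.mul_kronecker_mul, mul_one,
          Mt_mul_epsFiber hE hu hud ht' ht'd]
      rw [heq]
      by_cases h : u = t'
      · rw [if_pos h, ← Gmat'_eq]
        exact Gmem htm ht'm
      · rw [if_neg h, Matrix.kronecker_zero, smul_zero]
        exact Submodule.zero_mem _

lemma left_stable {a : Matrix (X × Y) (X × Y) ℂ}
    (h : ∀ G ∈ GmatSet' X B enum, a * G ∈ Submodule.span ℂ (GmatSet' X B enum)) :
    ∀ m ∈ Submodule.span ℂ (GmatSet' X B enum),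
      a * m ∈ Submodule.span ℂ (GmatSet' X B enum) := by
  intro m hm
  have hle : Submodule.span ℂ (GmatSet' X B enum)
      ≤ Submodule.comap (LinearMap.mulLeft ℂ a) (Submodule.span ℂ (GmatSet' X B enum)) :=
    Submodule.span_le.2 fun G hG => Submodule.mem_comap.2 (h G hG)
  exact hle hm

lemma right_stable {a : Matrix (X × Y) (X × Y) ℂ}
    (h : ∀ G ∈ GmatSet' X B enum, G * a ∈ Submodule.span ℂ (GmatSet' X B enum)) :
    ∀ m ∈ Submodule.span ℂ (GmatSet' X B enum),
      m * a ∈ Submodule.span ℂ (GmatSet' X B enum) := by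
  intro m hm
  have hle : Submodule.span ℂ (GmatSet' X B enum)
      ≤ Submodule.comap (LinearMap.mulRight ℂ a) (Submodule.span ℂ (GmatSet' X B enum)) :=
    Submodule.span_le.2 fun G hG => Submodule.mem_comap.2 (h G hG)
  exact hle hm

lemma ideal_part (hE : IsEnum B y₀ enum) (hwo : IsWellOrdering B y₀ enum)
    (hX : (3 * (Fintype.card X : ℂ)) ≠ 0) :
    ∀ a ∈ wreathTerw A B x₀ y₀, ∀ m ∈ Submodule.span ℂ (GmatSet' X B enum),
      a * m ∈ Submodule.span ℂ (GmatSet' X B enum) ∧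
      m * a ∈ Submodule.span ℂ (GmatSet' X B enum) := by
  intro a ha
  rw [wreathTerw] at ha
  induction ha using Algebra.adjoin_induction with
  | mem x hx =>
    intro m hm
    constructor
    · refine left_stable (fun G hG => ?_) m hm
      obtain ⟨t, htm, t', ht'm, rfl⟩ := hG
      exact (gen_action hE hwo hX hx htm ht'm).1
    · refine right_stable (fun G hG => ?_) m hm
      obtain ⟨t, htm, t', ht'm, rfl⟩ := hG
      exact (gen_action hE hwo hX hx htm ht'm).2
  | algebraMap r =>
    intro m hm
    constructor
    · have : algebraMap ℂ (Matrix (X × Y) (X × Y) ℂ) r * m = r • m := by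
        rw [Algebra.algebraMap_eq_smul_one, smul_mul_assoc, one_mul]
      rw [this]
      exact Submodule.smul_mem _ _ hm
    · have : m * algebraMap ℂ (Matrix (X × Y) (X × Y) ℂ) r = r • m := by
        rw [Algebra.algebraMap_eq_smul_one, mul_smul_comm, mul_one]
      rw [this]
      exact Submodule.smul_mem _ _ hm
  | add x y hx hy ihx ihy =>
    intro m hm
    constructor
    · rw [add_mul]
      exact Submodule.add_mem _ ((ihx m hm).1) ((ihy m hm).1)
    · rw [mul_add]
      exact Submodule.add_mem _ ((ihx m hm).2) ((ihy m hm).2)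
  | mul x y hx hy ihx ihy =>
    intro m hm
    constructor
    · rw [mul_assoc]
      exact (ihx _ ((ihy m hm).1)).1
    · rw [← mul_assoc]
      exact (ihy _ ((ihx m hm).2)).2

end Span

section Iso
variable {X Y : Type*} [Fintype X] [DecidableEq X] [Fintype Y] [DecidableEq Y]

variable (X) in
/-- The map `Mat_{T₃} → Mat_{X×Y}`, `N ↦ ∑ N t t' • G'_{t t'}`. -/
noncomputable def psiMap (B : AssocScheme Y) (enum : Finset (Y × Y) → Fin 3 → Y) :
    Matrix ↥(B.rels.erase (diagRel Y)) ↥(B.rels.erase (diagRel Y)) ℂ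
      →ₗ[ℂ] Matrix (X × Y) (X × Y) ℂ where
  toFun N := ∑ t : ↥(B.rels.erase (diagRel Y)), ∑ t' : ↥(B.rels.erase (diagRel Y)),
    N t t' • Gmat' X enum ↑t ↑t'
  map_add' N M := by
    simp only [Matrix.add_apply, add_smul]
    rw [← Finset.sum_add_distrib]
    refine Finset.sum_congr rfl fun t _ => ?_
    rw [← Finset.sum_add_distrib]
  map_smul' c N := by
    simp only [Matrix.smul_apply, RingHom.id_apply, smul_smul, Finset.smul_sum, smul_eq_mul]

variable (X) in
/-- The coordinate-extraction map. -/
noncomputable def phiMap (B : AssocScheme Y) (enum : Finset (Y × Y) → Fin 3 → Y)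
    (x₁ : X) : Matrix (X × Y) (X × Y) ℂ →ₗ[ℂ]
      Matrix ↥(B.rels.erase (diagRel Y)) ↥(B.rels.erase (diagRel Y)) ℂ where
  toFun M := Matrix.of fun t t' =>
    (3 * (Fintype.card X : ℂ)) * M (x₁, enum ↑t 0) (x₁, enum ↑t' 0)
  map_add' M N := by
    ext t t'
    simp only [Matrix.of_apply, Matrix.add_apply]
    ring
  map_smul' c M := by
    ext t t'
    simp only [Matrix.of_apply, Matrix.smul_apply, RingHom.id_apply, smul_eq_mul]
    ring

variable {B : AssocScheme Y} {y₀ : Y} {enum : Finset (Y × Y) → Fin 3 → Y}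

lemma phi_G (hE : IsEnum B y₀ enum) (hX : (3 * (Fintype.card X : ℂ)) ≠ 0) (x₁ : X)
    (s s' : ↥(B.rels.erase (diagRel Y))) :
    phiMap X B enum x₁ (Gmat' X enum ↑s ↑s') = Matrix.single s s' 1 := by
  obtain ⟨hsd, hs⟩ := Finset.mem_erase.1 s.2
  obtain ⟨hs'd, hs'⟩ := Finset.mem_erase.1 s'.2
  ext t t'
  obtain ⟨htd, ht⟩ := Finset.mem_erase.1 t.2
  obtain ⟨ht'd, ht'⟩ := Finset.mem_erase.1 t'.2
  rw [phiMap]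
  simp only [LinearMap.coe_mk, AddHom.coe_mk, Matrix.of_apply]
  rw [Gmat'_eq, Matrix.smul_apply, Matrix.kroneckerMap_apply]
  rw [show allOnes X x₁ x₁ = 1 from rfl, one_mul]
  by_cases hst : s = t
  · by_cases hst' : s' = t'
    · have h1 : linM enum hw (↑s) (↑s') (enum ↑t 0) (enum ↑t' 0) = 1 := by
        rw [← hst, ← hst']
        rw [linM_apply_eq (enum_inj hE hs hsd) (enum_inj hE hs' hs'd) hw 0 0]
        rw [sub_zero, hw_zero]
      rw [h1]
      rw [Matrix.single, Matrix.of_apply, if_pos ⟨hst, hst'⟩]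
      rw [smul_eq_mul, mul_one]
      field_simp
      exact div_self (right_ne_zero_of_mul hX)
    · have h1 : linM enum hw (↑s) (↑s') (enum ↑t 0) (enum ↑t' 0) = 0 := by
        refine linM_apply_zero_right (fun i => ?_) hw
        exact enum_ne hE hs' hs'd ht' ht'd
          (fun hc => hst' (Subtype.ext hc)) i 0
      rw [h1]
      rw [Matrix.single, Matrix.of_apply,
        if_neg (fun hc => hst' hc.2)]
      rw [smul_eq_mul, mul_zero, mul_zero]
  · have h1 : linM enum hw (↑s) (↑s') (enum ↑t 0) (enum ↑t' 0) = 0 := by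
      refine linM_apply_zero_left (fun i => ?_) hw
      exact enum_ne hE hs hsd ht htd (fun hc => hst (Subtype.ext hc)) i 0
    rw [h1]
    rw [Matrix.single, Matrix.of_apply, if_neg (fun hc => hst hc.1)]
    rw [smul_eq_mul, mul_zero, mul_zero]

lemma phi_psi (hE : IsEnum B y₀ enum) (hX : (3 * (Fintype.card X : ℂ)) ≠ 0) (x₁ : X)
    (N : Matrix ↥(B.rels.erase (diagRel Y)) ↥(B.rels.erase (diagRel Y)) ℂ) :
    phiMap X B enum x₁ (psiMap X B enum N) = N := by
  rw [psiMap]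
  simp only [LinearMap.coe_mk, AddHom.coe_mk]
  rw [map_sum]
  have h1 : ∀ t : ↥(B.rels.erase (diagRel Y)),
      phiMap X B enum x₁ (∑ t' : ↥(B.rels.erase (diagRel Y)), N t t' • Gmat' X enum ↑t ↑t')
      = ∑ t' : ↥(B.rels.erase (diagRel Y)), Matrix.single t t' (N t t') := by
    intro t
    rw [map_sum]
    refine Finset.sum_congr rfl fun t' _ => ?_
    rw [_root_.map_smul, phi_G hE hX, Matrix.smul_single, smul_eq_mul, mul_one]
  simp_rw [h1]
  exact (Matrix.matrix_eq_sum_single N).symm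

lemma psi_std (a b : ↥(B.rels.erase (diagRel Y))) :
    psiMap X B enum (Matrix.single a b 1) = Gmat' X enum ↑a ↑b := by
  rw [psiMap]
  simp only [LinearMap.coe_mk, AddHom.coe_mk]
  rw [Finset.sum_eq_single a]
  · rw [Finset.sum_eq_single b]
    · rw [Matrix.single_apply_same, one_smul]
    · intro t' _ hne
      rw [Matrix.single_apply_of_ne _ _ _ _ _ (fun hc => hne hc.2.symm),
        zero_smul]
    · intro h; exact absurd (Finset.mem_univ _) h
  · intro t _ hne
    refine Finset.sum_eq_zero fun t' _ => ?_
    rw [Matrix.single_apply_of_ne _ _ _ _ _ (fun hc => hne hc.1.symm),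
      zero_smul]
  · intro h; exact absurd (Finset.mem_univ _) h

lemma span_eq_range :
    Submodule.span ℂ (GmatSet' X B enum) = LinearMap.range (psiMap X B enum) := by
  apply le_antisymm
  · rw [Submodule.span_le]
    rintro G ⟨t, htm, t', ht'm, rfl⟩
    exact ⟨Matrix.single ⟨t, htm⟩ ⟨t', ht'm⟩ 1, psi_std _ _⟩
  · rintro m ⟨N, rfl⟩
    rw [psiMap]
    simp only [LinearMap.coe_mk, AddHom.coe_mk]
    refine Submodule.sum_mem _ fun t _ => Submodule.sum_mem _ fun t' _ =>
      Submodule.smul_mem _ _ (Gmem t.2 t'.2)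

lemma psi_mul (hE : IsEnum B y₀ enum) (hX : (Fintype.card X : ℂ) ≠ 0)
    (N N' : Matrix ↥(B.rels.erase (diagRel Y)) ↥(B.rels.erase (diagRel Y)) ℂ) :
    psiMap X B enum N * psiMap X B enum N' = psiMap X B enum (N * N') := by
  rw [psiMap]
  simp only [LinearMap.coe_mk, AddHom.coe_mk]
  have h1 : ∀ t t' : ↥(B.rels.erase (diagRel Y)),
      (N t t' • Gmat' X enum ↑t ↑t')
          * (∑ s : ↥(B.rels.erase (diagRel Y)), ∑ s' : ↥(B.rels.erase (diagRel Y)),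
            N' s s' • Gmat' X enum ↑s ↑s')
        = ∑ s' : ↥(B.rels.erase (diagRel Y)),
            (N t t' * N' t' s') • Gmat' X enum ↑t ↑s' := by
    intro t t'
    obtain ⟨htd, ht⟩ := Finset.mem_erase.1 t.2
    obtain ⟨ht'd, ht'⟩ := Finset.mem_erase.1 t'.2
    rw [Finset.mul_sum]
    rw [Finset.sum_eq_single t']
    · rw [Finset.mul_sum]
      refine Finset.sum_congr rfl fun s' _ => ?_
      obtain ⟨hs'd, hs'⟩ := Finset.mem_erase.1 s'.2
      rw [Matrix.smul_mul, Matrix.mul_smul,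
        Gmat'_mul_Gmat' hE hX ht htd ht' ht'd ht' ht'd hs' hs'd, if_pos rfl,
        smul_smul]
    · intro s _ hne
      obtain ⟨hsd, hs⟩ := Finset.mem_erase.1 s.2
      rw [Finset.mul_sum]
      refine Finset.sum_eq_zero fun s' _ => ?_
      obtain ⟨hs'd, hs'⟩ := Finset.mem_erase.1 s'.2
      rw [Matrix.smul_mul, Matrix.mul_smul,
        Gmat'_mul_Gmat' hE hX ht htd ht' ht'd hs hsd hs' hs'd,
        if_neg (fun hc => hne (Subtype.ext hc).symm), smul_zero, smul_zero]
    · intro h; exact absurd (Finset.mem_univ _) h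
  have h2 : ∀ t : ↥(B.rels.erase (diagRel Y)),
      ∑ t' : ↥(B.rels.erase (diagRel Y)),
        (N t t' • Gmat' X enum ↑t ↑t')
          * (∑ s : ↥(B.rels.erase (diagRel Y)), ∑ s' : ↥(B.rels.erase (diagRel Y)),
            N' s s' • Gmat' X enum ↑s ↑s')
      = ∑ s' : ↥(B.rels.erase (diagRel Y)), (N * N') t s' • Gmat' X enum ↑t ↑s' := by
    intro t
    simp_rw [h1 t]
    rw [Finset.sum_comm]
    refine Finset.sum_congr rfl fun s' _ => ?_
    rw [Matrix.mul_apply, Finset.sum_smul]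
  rw [Finset.sum_mul]
  refine Finset.sum_congr rfl fun t _ => ?_
  rw [Finset.sum_mul]
  exact h2 t

end Iso

section Statements

variable {X Y : Type*} [Fintype X] [DecidableEq X] [Fintype Y] [DecidableEq Y]

theorem stmt12 (A : AssocScheme X) (B : AssocScheme Y) (h3 : ThreeEquivalenced B)
    (hT : 2 < B.rels.card) (x₀ : X) (y₀ : Y)
    (enum : Finset (Y × Y) → Fin 3 → Y) (hwo : IsWellOrdering B y₀ enum) :
    (∀ a ∈ wreathTerw A B x₀ y₀, ∀ m ∈ Submodule.span ℂ (GmatSet' X B enum),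
      a * m ∈ Submodule.span ℂ (GmatSet' X B enum) ∧
      m * a ∈ Submodule.span ℂ (GmatSet' X B enum)) ∧
    (∀ t ∈ B.rels.erase (diagRel Y), ∀ t' ∈ B.rels.erase (diagRel Y),
      ∀ t'' ∈ B.rels.erase (diagRel Y), ∀ t''' ∈ B.rels.erase (diagRel Y),
      Gmat' X enum t t' * Gmat' X enum t''' t'' =
        if t' = t''' then Gmat' X enum t t'' else 0) ∧
    ∃ φ : Matrix (X × Y) (X × Y) ℂ →ₗ[ℂ]
        Matrix ↥(B.rels.erase (diagRel Y)) ↥(B.rels.erase (diagRel Y)) ℂ,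
      (∀ t t' : ↥(B.rels.erase (diagRel Y)),
        φ (Gmat' X enum ↑t ↑t') = Matrix.single t t' 1) ∧
      Set.InjOn φ (Submodule.span ℂ (GmatSet' X B enum)) ∧
      φ '' (Submodule.span ℂ (GmatSet' X B enum)) = Set.univ ∧
      ∀ a ∈ Submodule.span ℂ (GmatSet' X B enum),
        ∀ b ∈ Submodule.span ℂ (GmatSet' X B enum), φ (a * b) = φ a * φ b := by
  have hE := hwo.1
  have hXne : (Fintype.card X : ℂ) ≠ 0 := cardX_ne_zero A
  have h3X : (3 * (Fintype.card X : ℂ)) ≠ 0 :=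
    mul_ne_zero (by norm_num) hXne
  refine ⟨ideal_part hE hwo h3X, ?_, ?_⟩
  · intro t htm t' ht'm t'' ht''m t''' ht'''m
    obtain ⟨htd, ht⟩ := Finset.mem_erase.1 htm
    obtain ⟨ht'd, ht'⟩ := Finset.mem_erase.1 ht'm
    obtain ⟨ht''d, ht''⟩ := Finset.mem_erase.1 ht''m
    obtain ⟨ht'''d, ht'''⟩ := Finset.mem_erase.1 ht'''m
    exact Gmat'_mul_Gmat' hE hXne ht htd ht' ht'd ht''' ht'''d ht'' ht''d
  · haveI := X_nonempty A
    set x₁ := Classical.arbitrary X with hx₁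
    refine ⟨phiMap X B enum x₁, fun t t' => phi_G hE h3X x₁ t t', ?_, ?_, ?_⟩
    · intro a ha b hb hab
      rw [SetLike.mem_coe, span_eq_range] at ha hb
      obtain ⟨N, rfl⟩ := ha
      obtain ⟨N', rfl⟩ := hb
      have h1 := phi_psi hE h3X x₁ N
      have h2 := phi_psi hE h3X x₁ N'
      rw [h1, h2] at hab
      rw [hab]
    · apply Set.eq_univ_of_forall
      intro N
      refine ⟨psiMap X B enum N, ?_, phi_psi hE h3X x₁ N⟩
      rw [SetLike.mem_coe, span_eq_range]
      exact ⟨N, rfl⟩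
    · intro a ha b hb
      rw [span_eq_range] at ha hb
      obtain ⟨N, rfl⟩ := ha
      obtain ⟨N', rfl⟩ := hb
      rw [psi_mul hE hXne, phi_psi hE h3X, phi_psi hE h3X, phi_psi hE h3X]

end Statements
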